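/- arXiv:2309.00603 — 3 statements merged into one kernel-verified Lean document; each statement's English description precedes it below -/
import Mathlib

section
/- Let Ω ⊂ ℂ be a simply connected open set, star-shaped around 0 but not containing 0, and let p, q be holomorphic on Ω with p nowhere zero on Ω. Define f₀(a) = (1/p(a)) exp(−∫_b^a (q/p) dζ) for a fixed base point b ∈ Ω. Suppose there exist τ > 0, δ > 0, C ≥ 0 such that |q(ζ)/p(ζ) + τ/ζ| < C whenever ζ ∈ Ω, |ζ| < δ. Then lim_{ζ→0, ζ∈Ω} exp(−∫_b^ζ (q/p)) = 0, and consequently f₀ satisfies f₀(a) = −(1/p(a)) ∫_{ζ=0}^a q(ζ) f₀(ζ) dζ for all a ∈ Ω, where the integral is an improper integral along a path from 0 to a inside Ω. -/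
open Complex

set_option linter.unusedVariables false

-- derivative of log of norm along a curve
lemma logNormDeriv {γ : ℝ → ℂ} {v : ℂ} {u : ℝ} (hγ : HasDerivAt γ v u) (h0 : γ u ≠ 0) :
    HasDerivAt (fun x => Real.log ‖γ x‖) ((v / γ u).re) u := by
  have hre : HasDerivAt (fun x => (γ x).re) v.re u :=
    Complex.reCLM.hasFDerivAt.comp_hasDerivAt u hγ
  have him : HasDerivAt (fun x => (γ x).im) v.im u :=
    Complex.imCLM.hasFDerivAt.comp_hasDerivAt u hγ
  have hN : HasDerivAt (fun x => Complex.normSq (γ x))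
      (2 * ((γ u).re * v.re + (γ u).im * v.im)) u := by
    have := (hre.mul hre).add (him.mul him)
    simpa [Complex.normSq_apply, mul_comm, Pi.mul_def, Pi.add_def] using this.congr_deriv (by ring)
  have hNne : Complex.normSq (γ u) ≠ 0 := by
    simpa [Complex.normSq_eq_zero] using h0
  have hlog : HasDerivAt (fun x => Real.log (Complex.normSq (γ x)))
      (2 * ((γ u).re * v.re + (γ u).im * v.im) / Complex.normSq (γ u)) u := hN.log hNne
  have heq : (fun x => Real.log ‖γ x‖) = fun x => (1/2) * Real.log (Complex.normSq (γ x)) := by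
    funext x
    rw [← Complex.sq_norm, Real.log_pow]
    push_cast; ring
  rw [heq]
  have := hlog.const_mul (1/2 : ℝ)
  convert this using 1
  · rfl
  · rfl
  rw [Complex.div_re]
  field_simp

private lemma aux_master (Ω : Set ℂ) (p q : ℂ → ℂ) (hpz : ∀ z ∈ Ω, p z ≠ 0) (h0 : (0:ℂ) ∉ Ω)
    (F : ℂ → ℂ) (hF : ∀ z ∈ Ω, HasDerivAt F (q z / p z) z) (τ : ℝ)
    :
    ∀ (w v : ℂ) (u : ℝ), w + (u:ℂ)*v ∈ Ω →
      HasDerivAt (fun x : ℝ => (F (w + (x:ℂ)*v)).re + τ * Real.log ‖w + (x:ℂ)*v‖)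
        (((q (w + (u:ℂ)*v) / p (w + (u:ℂ)*v) + (τ:ℂ)/(w + (u:ℂ)*v)) * v).re) u := by
  intro w v u hmem
  set ζ := w + (u:ℂ)*v with hζ
  have hζne : ζ ≠ 0 := fun h => h0 (h ▸ hmem)
  have hγ : HasDerivAt (fun x : ℝ => w + (x:ℂ)*v) v u := by
    have h1 : HasDerivAt (fun x : ℝ => (x:ℂ)) 1 u := Complex.ofRealCLM.hasDerivAt
    simpa using (h1.mul_const v).const_add w
  have hFd : HasDerivAt (fun x : ℝ => F (w + (x:ℂ)*v)) (v * (q ζ / p ζ)) u := by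
    have := ((hF ζ hmem).hasFDerivAt.restrictScalars ℝ).comp_hasDerivAt u hγ
    simpa [Function.comp_def] using this
  have hre : HasDerivAt (fun x : ℝ => (F (w + (x:ℂ)*v)).re) ((v * (q ζ / p ζ)).re) u :=
    Complex.reCLM.hasFDerivAt.comp_hasDerivAt u hFd
  have hlog : HasDerivAt (fun x : ℝ => τ * Real.log ‖w + (x:ℂ)*v‖) (τ * ((v / ζ).re)) u :=
    (logNormDeriv hγ hζne).const_mul τ
  have := hre.add hlog
  convert this using 1
  · rfl
  · rfl
  · rfl
  rw [add_mul, Complex.add_re]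
  congr 1
  · ring_nf
  · rw [div_mul_eq_mul_div, mul_div_assoc, Complex.re_ofReal_mul]

private lemma aux_gint (Ω : Set ℂ) (hΩ : IsOpen Ω)
    (hstar : ∀ a ∈ Ω, ∀ t : ℝ, t ∈ Set.Ioc (0:ℝ) 1 → (t : ℂ) * a ∈ Ω)
    (h0 : (0:ℂ) ∉ Ω)
    (p q : ℂ → ℂ) (hp : DifferentiableOn ℂ p Ω) (hq : DifferentiableOn ℂ q Ω)
    (hpz : ∀ z ∈ Ω, p z ≠ 0) (τ δ C : ℝ)
    (g : ℂ → ℝ → ℝ)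
    (hgdef : g = fun z (s:ℝ) => ((q ((s:ℂ)*z) / p ((s:ℂ)*z) + (τ:ℂ)/((s:ℂ)*z)) * z).re)
    (hgbound : ∀ z ∈ Ω ∩ Metric.ball 0 δ, ∀ s : ℝ, s ∈ Set.Ioc (0:ℝ) 1 → |g z s| ≤ C * ‖z‖) :
    ∀ z ∈ Ω ∩ Metric.ball 0 δ, IntervalIntegrable (g z) MeasureTheory.volume 0 1 := by
  intro z hz
  have hzne : z ≠ 0 := fun h => h0 (h ▸ hz.1)
  have hmapsto : Set.MapsTo (fun s : ℝ => (s:ℂ)*z) (Set.Ioc 0 1) Ω := by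
    intro s hs; exact hstar z hz.1 s hs
  have hcont : ContinuousOn (g z) (Set.Ioc 0 1) := by
    rw [hgdef]
    have hc : ContinuousOn (fun s : ℝ => (s:ℂ)*z) (Set.Ioc 0 1) :=
      (Complex.continuous_ofReal.continuousOn).mul continuousOn_const
    have h1 : ContinuousOn (fun s : ℝ => q ((s:ℂ)*z) / p ((s:ℂ)*z)) (Set.Ioc 0 1) := by
      apply ContinuousOn.div
      · exact (hq.continuousOn).comp hc hmapsto
      · exact (hp.continuousOn).comp hc hmapsto
      · intro s hs; exact hpz _ (hmapsto hs)
    have h2 : ContinuousOn (fun s : ℝ => (τ:ℂ)/((s:ℂ)*z)) (Set.Ioc 0 1) := by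
      apply ContinuousOn.div continuousOn_const hc
      intro s hs
      exact mul_ne_zero (by exact_mod_cast (ne_of_gt hs.1)) hzne
    exact (Complex.continuous_re.comp_continuousOn ((h1.add h2).mul continuousOn_const))
  rw [intervalIntegrable_iff, Set.uIoc_of_le (by norm_num : (0:ℝ) ≤ 1)]
  refine ⟨(hcont).aestronglyMeasurable measurableSet_Ioc, ?_⟩
  apply MeasureTheory.HasFiniteIntegral.restrict_of_bounded (C := C * ‖z‖)
    (by simp : MeasureTheory.volume (Set.Ioc (0:ℝ) 1) < ⊤)
  filter_upwards [MeasureTheory.ae_restrict_mem measurableSet_Ioc] with s hs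
  simpa using hgbound z hz s hs

private lemma aux_ftc (Ω : Set ℂ) (δ : ℝ) (ψ : ℂ → ℝ) (g : ℂ → ℝ → ℝ)
    (hray : ∀ z ∈ Ω, ∀ u : ℝ, u ∈ Set.Ioc (0:ℝ) 1 →
      HasDerivAt (fun x : ℝ => ψ ((x:ℂ)*z)) (g z u) u)
    (hgint : ∀ z ∈ Ω ∩ Metric.ball 0 δ, IntervalIntegrable (g z) MeasureTheory.volume 0 1) :
    ∀ z ∈ Ω ∩ Metric.ball 0 δ, ∀ t : ℝ, t ∈ Set.Ioc (0:ℝ) 1 →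
      ∫ s in t..1, g z s = ψ z - ψ ((t:ℂ)*z) := by
  intro z hz t ht
  have h1 : ∫ s in t..1, g z s = ψ (((1:ℝ):ℂ)*z) - ψ ((t:ℂ)*z) := by
    apply intervalIntegral.integral_eq_sub_of_hasDerivAt (f := fun x : ℝ => ψ ((x:ℂ)*z))
    · intro u hu
      rw [Set.uIcc_of_le ht.2] at hu
      exact hray z hz.1 u ⟨lt_of_lt_of_le ht.1 hu.1, hu.2⟩
    · apply (hgint z hz).mono_set
      rw [Set.uIcc_of_le ht.2, Set.uIcc_of_le (by norm_num : (0:ℝ) ≤ 1)]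
      exact Set.Icc_subset_Icc (le_of_lt ht.1) le_rfl
  simpa using h1

private lemma aux_Lray (Ω : Set ℂ) (δ : ℝ) (τ : ℝ) (p q : ℂ → ℂ) (ψ : ℂ → ℝ) (g : ℂ → ℝ → ℝ)
    (hgdef : g = fun z (s:ℝ) => ((q ((s:ℂ)*z) / p ((s:ℂ)*z) + (τ:ℂ)/((s:ℂ)*z)) * z).re)
    (hgint : ∀ z ∈ Ω ∩ Metric.ball 0 δ, IntervalIntegrable (g z) MeasureTheory.volume 0 1)
    (hftc : ∀ z ∈ Ω ∩ Metric.ball 0 δ, ∀ t : ℝ, t ∈ Set.Ioc (0:ℝ) 1 →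
      ∫ s in t..1, g z s = ψ z - ψ ((t:ℂ)*z))
    (L : ℂ → ℝ) (hLdef : L = fun z => ψ z - ∫ s in (0:ℝ)..1, g z s) :
    ∀ z ∈ Ω ∩ Metric.ball 0 δ, ∀ t : ℝ, t ∈ Set.Ioc (0:ℝ) 1 → L ((t:ℂ)*z) = L z := by
  intro z hz t ht
  have key : ∀ s : ℝ, g ((t:ℂ)*z) s = t * g z (s*t) := by
    intro s
    rw [hgdef]
    have hc : (s:ℂ)*((t:ℂ)*z) = ((s*t : ℝ):ℂ)*z := by push_cast; ring
    simp only [hc]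
    rw [show (q (((s*t:ℝ):ℂ)*z) / p (((s*t:ℝ):ℂ)*z) + (τ:ℂ)/(((s*t:ℝ):ℂ)*z)) * ((t:ℂ)*z)
        = (t:ℂ) * ((q (((s*t:ℝ):ℂ)*z) / p (((s*t:ℝ):ℂ)*z) + (τ:ℂ)/(((s*t:ℝ):ℂ)*z)) * z) by ring,
      Complex.re_ofReal_mul]
  have h1 : ∫ s in (0:ℝ)..1, g ((t:ℂ)*z) s = ∫ s in (0:ℝ)..t, g z s := by
    rw [intervalIntegral.integral_congr (g := fun s => t * g z (s*t)) (fun s _ => key s),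
      intervalIntegral.integral_const_mul, intervalIntegral.mul_integral_comp_mul_right]
    norm_num
  have h2 : (∫ s in (0:ℝ)..t, g z s) + ∫ s in t..(1:ℝ), g z s = ∫ s in (0:ℝ)..1, g z s := by
    apply intervalIntegral.integral_add_adjacent_intervals
    · apply (hgint z hz).mono_set
      rw [Set.uIcc_of_le (le_of_lt ht.1), Set.uIcc_of_le (by norm_num : (0:ℝ) ≤ 1)]
      exact Set.Icc_subset_Icc le_rfl ht.2
    · apply (hgint z hz).mono_set
      rw [Set.uIcc_of_le ht.2, Set.uIcc_of_le (by norm_num : (0:ℝ) ≤ 1)]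
      exact Set.Icc_subset_Icc (le_of_lt ht.1) le_rfl
  have h3 := hftc z hz t ht
  rw [hLdef]
  simp only
  rw [h1, ← h2]
  rw [h3] at *
  ring

private lemma aux_Lloc (Ω : Set ℂ) (δ C : ℝ) (τ : ℝ) (p q : ℂ → ℂ) (ψ : ℂ → ℝ) (g : ℂ → ℝ → ℝ)
    (hstar : ∀ a ∈ Ω, ∀ t : ℝ, t ∈ Set.Ioc (0:ℝ) 1 → (t : ℂ) * a ∈ Ω)
    (hbound : ∀ z ∈ Ω, ‖z‖ < δ → ‖q z / p z + (τ : ℂ) / z‖ < C)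
    (hmaster : ∀ (w v : ℂ) (u : ℝ), w + (u:ℂ)*v ∈ Ω →
      HasDerivAt (fun x : ℝ => ψ (w + (x:ℂ)*v))
        (((q (w + (u:ℂ)*v) / p (w + (u:ℂ)*v) + (τ:ℂ)/(w + (u:ℂ)*v)) * v).re) u)
    (hray : ∀ z ∈ Ω, ∀ u : ℝ, u ∈ Set.Ioc (0:ℝ) 1 →
      HasDerivAt (fun x : ℝ => ψ ((x:ℂ)*z)) (g z u) u)
    (hgint : ∀ z ∈ Ω ∩ Metric.ball 0 δ, IntervalIntegrable (g z) MeasureTheory.volume 0 1)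
    (hgbound : ∀ z ∈ Ω ∩ Metric.ball 0 δ, ∀ s : ℝ, s ∈ Set.Ioc (0:ℝ) 1 → |g z s| ≤ C * ‖z‖)
    (L : ℂ → ℝ) (hLdef : L = fun z => ψ z - ∫ s in (0:ℝ)..1, g z s) :
    ∀ z₀ ∈ Ω ∩ Metric.ball 0 δ, ∀ r : ℝ, 0 < r → Metric.ball z₀ r ⊆ Ω ∩ Metric.ball 0 δ →
      ∀ z₁ ∈ Metric.ball z₀ r, L z₁ = L z₀ := by
  intro z₀ hz₀ r hr hball z₁ hz₁
  set S := Ω ∩ Metric.ball 0 δ with hS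
  have hz₁S : z₁ ∈ S := hball hz₁
  -- the chord points
  have hchord : ∀ u : ℝ, u ∈ Set.Icc (0:ℝ) 1 → z₀ + (u:ℂ)*(z₁ - z₀) ∈ Metric.ball z₀ r := by
    intro u hu
    rw [Metric.mem_ball, dist_eq_norm]
    calc ‖z₀ + (u:ℂ)*(z₁ - z₀) - z₀‖ = u * ‖z₁ - z₀‖ := by
          rw [show z₀ + (u:ℂ)*(z₁ - z₀) - z₀ = (u:ℂ)*(z₁ - z₀) by ring, norm_mul,
            Complex.norm_real, Real.norm_of_nonneg hu.1]
      _ ≤ 1 * ‖z₁ - z₀‖ := mul_le_mul_of_nonneg_right hu.2 (norm_nonneg _)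
      _ < r := by rw [one_mul]; rw [Metric.mem_ball, dist_eq_norm] at hz₁; exact hz₁
  -- the scaled chord points are in S
  have hmemS : ∀ s : ℝ, s ∈ Set.Ioc (0:ℝ) 1 → ∀ u : ℝ, u ∈ Set.Icc (0:ℝ) 1 →
      (s:ℂ)*z₀ + (u:ℂ)*((s:ℂ)*(z₁ - z₀)) ∈ S ∧
      (s:ℂ)*z₀ + (u:ℂ)*((s:ℂ)*(z₁ - z₀)) = (s:ℂ)*(z₀ + (u:ℂ)*(z₁ - z₀)) := by
    intro s hs u hu
    have heq : (s:ℂ)*z₀ + (u:ℂ)*((s:ℂ)*(z₁ - z₀)) = (s:ℂ)*(z₀ + (u:ℂ)*(z₁ - z₀)) := by ring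
    refine ⟨?_, heq⟩
    rw [heq]
    have hcS : z₀ + (u:ℂ)*(z₁ - z₀) ∈ S := hball (hchord u hu)
    constructor
    · exact hstar _ hcS.1 s hs
    · rw [Metric.mem_ball, dist_zero_right, norm_mul, Complex.norm_real,
        Real.norm_of_nonneg (le_of_lt hs.1)]
      calc s * ‖z₀ + (u:ℂ)*(z₁ - z₀)‖ ≤ 1 * ‖z₀ + (u:ℂ)*(z₁ - z₀)‖ :=
            mul_le_mul_of_nonneg_right hs.2 (norm_nonneg _)
        _ < δ := by
            rw [one_mul]
            have := hcS.2; rwa [Metric.mem_ball, dist_zero_right] at this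
  -- bound on D s := ψ (s z₁) - ψ (s z₀)
  have hD : ∀ s : ℝ, s ∈ Set.Ioc (0:ℝ) 1 →
      |ψ ((s:ℂ)*z₁) - ψ ((s:ℂ)*z₀)| ≤ (C * (s * ‖z₁ - z₀‖)) * 1 := by
    intro s hs
    have hbndf : ∀ u ∈ Set.Icc (0:ℝ) 1, ‖(((q ((s:ℂ)*z₀ + (u:ℂ)*((s:ℂ)*(z₁ - z₀))) /
          p ((s:ℂ)*z₀ + (u:ℂ)*((s:ℂ)*(z₁ - z₀))) +
          (τ:ℂ)/((s:ℂ)*z₀ + (u:ℂ)*((s:ℂ)*(z₁ - z₀)))) * ((s:ℂ)*(z₁ - z₀))).re)‖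
          ≤ C * (s * ‖z₁ - z₀‖) := by
      intro u hu
      obtain ⟨hmem, -⟩ := hmemS s hs u hu
      have hnlt : ‖(s:ℂ)*z₀ + (u:ℂ)*((s:ℂ)*(z₁ - z₀))‖ < δ := by
        have := hmem.2; rwa [Metric.mem_ball, dist_zero_right] at this
      calc ‖(((q ((s:ℂ)*z₀ + (u:ℂ)*((s:ℂ)*(z₁ - z₀))) /
            p ((s:ℂ)*z₀ + (u:ℂ)*((s:ℂ)*(z₁ - z₀))) +
            (τ:ℂ)/((s:ℂ)*z₀ + (u:ℂ)*((s:ℂ)*(z₁ - z₀)))) * ((s:ℂ)*(z₁ - z₀))).re)‖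
          ≤ ‖(q ((s:ℂ)*z₀ + (u:ℂ)*((s:ℂ)*(z₁ - z₀))) /
            p ((s:ℂ)*z₀ + (u:ℂ)*((s:ℂ)*(z₁ - z₀))) +
            (τ:ℂ)/((s:ℂ)*z₀ + (u:ℂ)*((s:ℂ)*(z₁ - z₀)))) * ((s:ℂ)*(z₁ - z₀))‖ := by
            exact Complex.abs_re_le_norm _
        _ = ‖(q ((s:ℂ)*z₀ + (u:ℂ)*((s:ℂ)*(z₁ - z₀))) /
            p ((s:ℂ)*z₀ + (u:ℂ)*((s:ℂ)*(z₁ - z₀))) +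
            (τ:ℂ)/((s:ℂ)*z₀ + (u:ℂ)*((s:ℂ)*(z₁ - z₀))))‖ * (s * ‖z₁ - z₀‖) := by
            rw [norm_mul, norm_mul, Complex.norm_real, Real.norm_of_nonneg (le_of_lt hs.1)]
        _ ≤ C * (s * ‖z₁ - z₀‖) := by
            apply mul_le_mul_of_nonneg_right (le_of_lt (hbound _ hmem.1 hnlt))
            exact mul_nonneg (le_of_lt hs.1) (norm_nonneg _)
    have key := Convex.norm_image_sub_le_of_norm_hasDerivWithin_le
      (f := fun u : ℝ => ψ ((s:ℂ)*z₀ + (u:ℂ)*((s:ℂ)*(z₁ - z₀))))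
      (f' := fun u : ℝ => ((q ((s:ℂ)*z₀ + (u:ℂ)*((s:ℂ)*(z₁ - z₀))) /
          p ((s:ℂ)*z₀ + (u:ℂ)*((s:ℂ)*(z₁ - z₀))) +
          (τ:ℂ)/((s:ℂ)*z₀ + (u:ℂ)*((s:ℂ)*(z₁ - z₀)))) * ((s:ℂ)*(z₁ - z₀))).re)
      (s := Set.Icc (0:ℝ) 1) (C := C * (s * ‖z₁ - z₀‖))
      (fun u hu => ((hmaster ((s:ℂ)*z₀) ((s:ℂ)*(z₁-z₀)) u (hmemS s hs u hu).1.1).hasDerivWithinAt))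
      hbndf (convex_Icc 0 1) (Set.left_mem_Icc.mpr zero_le_one) (Set.right_mem_Icc.mpr zero_le_one)
    have e1 : (s:ℂ)*z₀ + ((1:ℝ):ℂ)*((s:ℂ)*(z₁ - z₀)) = (s:ℂ)*z₁ := by push_cast; ring
    have e0 : (s:ℂ)*z₀ + ((0:ℝ):ℂ)*((s:ℂ)*(z₁ - z₀)) = (s:ℂ)*z₀ := by push_cast; ring
    beta_reduce at key
    rw [e1, e0] at key
    simpa using key
  -- the difference h := g z₁ - g z₀ and FTC on [ε, 1]
  have hftcD : ∀ ε : ℝ, ε ∈ Set.Ioc (0:ℝ) 1 →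
      ∫ s in ε..1, (g z₁ s - g z₀ s) =
        (ψ (((1:ℝ):ℂ)*z₁) - ψ (((1:ℝ):ℂ)*z₀)) - (ψ ((ε:ℂ)*z₁) - ψ ((ε:ℂ)*z₀)) := by
    intro ε hε
    apply intervalIntegral.integral_eq_sub_of_hasDerivAt
      (f := fun x : ℝ => ψ ((x:ℂ)*z₁) - ψ ((x:ℂ)*z₀))
    · intro u hu
      rw [Set.uIcc_of_le hε.2] at hu
      have hu' : u ∈ Set.Ioc (0:ℝ) 1 := ⟨lt_of_lt_of_le hε.1 hu.1, hu.2⟩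
      exact (hray z₁ hz₁S.1 u hu').sub (hray z₀ hz₀.1 u hu')
    · apply IntervalIntegrable.sub ((hgint z₁ hz₁S).mono_set ?_) ((hgint z₀ hz₀).mono_set ?_)
      all_goals
        rw [Set.uIcc_of_le hε.2, Set.uIcc_of_le (by norm_num : (0:ℝ) ≤ 1)]
      all_goals exact Set.Icc_subset_Icc (le_of_lt hε.1) le_rfl
  -- limit of the FTC identity as ε → 0⁺
  have hlim1 : Filter.Tendsto (fun ε : ℝ => ∫ s in ε..1, (g z₁ s - g z₀ s))
      (nhdsWithin 0 (Set.Ioi 0)) (nhds ((ψ z₁ - ψ z₀))) := by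
    have : Filter.Tendsto (fun ε : ℝ => ψ ((ε:ℂ)*z₁) - ψ ((ε:ℂ)*z₀))
        (nhdsWithin 0 (Set.Ioi 0)) (nhds 0) := by
      apply squeeze_zero_norm' (a := fun ε => (C * (ε * ‖z₁ - z₀‖)) * 1)
      · filter_upwards [Filter.inter_mem_inf (Metric.ball_mem_nhds (0:ℝ) one_pos)
          (Filter.mem_principal_self (Set.Ioi (0:ℝ)))] with ε hε
        have hε' : ε ∈ Set.Ioc (0:ℝ) 1 := by
          constructor
          · exact hε.2
          · have := hε.1; rw [Metric.mem_ball, Real.dist_eq, sub_zero] at this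
            exact le_of_lt (lt_of_abs_lt this)
        exact hD ε hε'
      · have : Filter.Tendsto (fun ε : ℝ => (C * (ε * ‖z₁ - z₀‖)) * 1) (nhds 0)
            (nhds ((C * ((0:ℝ) * ‖z₁ - z₀‖)) * 1)) := by
          apply Filter.Tendsto.mul_const
          exact (Filter.Tendsto.mul_const _ (Filter.tendsto_id)).const_mul C
        simpa using this.mono_left nhdsWithin_le_nhds
    have h2 := Filter.Tendsto.sub
        (tendsto_const_nhds (x := ψ (((1:ℝ):ℂ)*z₁) - ψ (((1:ℝ):ℂ)*z₀))
          (f := nhdsWithin (0:ℝ) (Set.Ioi 0))) this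
    rw [sub_zero] at h2
    apply Filter.Tendsto.congr' ?_ ?_
    · exact fun ε => (ψ (((1:ℝ):ℂ)*z₁) - ψ (((1:ℝ):ℂ)*z₀)) - (ψ ((ε:ℂ)*z₁) - ψ ((ε:ℂ)*z₀))
    · filter_upwards [Filter.inter_mem_inf (Metric.ball_mem_nhds (0:ℝ) one_pos)
        (Filter.mem_principal_self (Set.Ioi (0:ℝ)))] with ε hε
      have hε' : ε ∈ Set.Ioc (0:ℝ) 1 := by
        constructor
        · exact hε.2
        · have := hε.1; rw [Metric.mem_ball, Real.dist_eq, sub_zero] at this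
          exact le_of_lt (lt_of_abs_lt this)
      exact (hftcD ε hε').symm
    · simpa using h2
  have hlim2 : Filter.Tendsto (fun ε : ℝ => ∫ s in ε..1, (g z₁ s - g z₀ s))
      (nhdsWithin 0 (Set.Ioi 0)) (nhds (∫ s in (0:ℝ)..1, (g z₁ s - g z₀ s))) := by
    have hint : MeasureTheory.IntegrableOn (fun s => g z₁ s - g z₀ s)
        (Set.uIcc (0:ℝ) 1) MeasureTheory.volume := by
      rw [Set.uIcc_of_le (by norm_num : (0:ℝ) ≤ 1), integrableOn_Icc_iff_integrableOn_Ioc]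
      exact (intervalIntegrable_iff_integrableOn_Ioc_of_le (by norm_num : (0:ℝ) ≤ 1)).mp
        ((hgint z₁ hz₁S).sub (hgint z₀ hz₀))
    have hcont := intervalIntegral.continuousOn_primitive_interval_left
      (f := fun s => g z₁ s - g z₀ s) (μ := MeasureTheory.volume) (a := (0:ℝ)) (b := 1) hint
    have hcwa : ContinuousWithinAt (fun x : ℝ => ∫ t in x..1, (g z₁ t - g z₀ t)) (Set.uIcc 0 1) 0 :=
      hcont 0 (by rw [Set.uIcc_of_le (by norm_num : (0:ℝ) ≤ 1)]; exact Set.left_mem_Icc.mpr zero_le_one)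
    have h1 : ContinuousWithinAt (fun x : ℝ => ∫ t in x..1, (g z₁ t - g z₀ t)) (Set.Ioc 0 1) 0 :=
      hcwa.mono (by rw [Set.uIcc_of_le (by norm_num : (0:ℝ) ≤ 1)]; exact Set.Ioc_subset_Icc_self)
    have h2 : Filter.Tendsto (fun x : ℝ => ∫ t in x..1, (g z₁ t - g z₀ t))
        (nhdsWithin 0 (Set.Ioc 0 1)) (nhds (∫ t in (0:ℝ)..1, (g z₁ t - g z₀ t))) := h1
    rwa [nhdsWithin_Ioc_eq_nhdsGT zero_lt_one] at h2
  have heq := tendsto_nhds_unique hlim2 hlim1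
  rw [intervalIntegral.integral_sub (hgint z₁ hz₁S) (hgint z₀ hz₀)] at heq
  rw [hLdef]
  simp only
  linarith [heq]

private lemma aux_Lconst (Ω : Set ℂ) (hΩ : IsOpen Ω) (hsc : SimplyConnectedSpace Ω)
    (hstar : ∀ a ∈ Ω, ∀ t : ℝ, t ∈ Set.Ioc (0:ℝ) 1 → (t : ℂ) * a ∈ Ω)
    (h0 : (0:ℂ) ∉ Ω) (δ : ℝ) (hδ : 0 < δ) (L : ℂ → ℝ)
    (hLray : ∀ z ∈ Ω ∩ Metric.ball 0 δ, ∀ t : ℝ, t ∈ Set.Ioc (0:ℝ) 1 → L ((t:ℂ)*z) = L z)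
    (hLloc : ∀ z₀ ∈ Ω ∩ Metric.ball 0 δ, ∀ r : ℝ, 0 < r →
      Metric.ball z₀ r ⊆ Ω ∩ Metric.ball 0 δ → ∀ z₁ ∈ Metric.ball z₀ r, L z₁ = L z₀) :
    ∀ z ∈ Ω ∩ Metric.ball 0 δ, ∀ z' ∈ Ω ∩ Metric.ball 0 δ, L z = L z' := by
  intro z hz z' hz'
  set S := Ω ∩ Metric.ball 0 δ with hS
  haveI := hsc
  have hpc : IsPathConnected Ω := by
    rw [isPathConnected_iff_pathConnectedSpace]
    infer_instance
  obtain ⟨Γ, hΓmem⟩ := hpc.joinedIn z hz.1 z' hz'.1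
  obtain ⟨M, hM⟩ := (isCompact_univ (X := unitInterval)).exists_bound_of_continuousOn
    (Γ.continuous.continuousOn (s := Set.univ))
  set M' : ℝ := max M 1 with hM'def
  have hM'pos : 0 < M' := lt_of_lt_of_le one_pos (le_max_right _ _)
  have hMbd : ∀ s : unitInterval, ‖Γ s‖ ≤ M' := fun s =>
    le_trans (hM s (Set.mem_univ s)) (le_max_left _ _)
  set t : ℝ := min 1 (δ/(2*M')) with htdef
  have ht : t ∈ Set.Ioc (0:ℝ) 1 :=
    ⟨lt_min one_pos (by positivity), min_le_left _ _⟩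
  have htM : t * M' ≤ δ/2 := by
    calc t * M' ≤ (δ/(2*M')) * M' := mul_le_mul_of_nonneg_right (min_le_right _ _) (le_of_lt hM'pos)
      _ = δ/2 := by field_simp
  have htΓ : ∀ s : unitInterval, (t:ℂ)*Γ s ∈ S := by
    intro s
    refine ⟨hstar _ (hΓmem s) t ht, ?_⟩
    rw [Metric.mem_ball, dist_zero_right, norm_mul, Complex.norm_real,
      Real.norm_of_nonneg (le_of_lt ht.1)]
    calc t * ‖Γ s‖ ≤ t * M' := mul_le_mul_of_nonneg_left (hMbd s) (le_of_lt ht.1)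
      _ ≤ δ/2 := htM
      _ < δ := by linarith
  -- local constancy along the path
  have hkey : ∀ s₀ : unitInterval, ∃ U : Set unitInterval, IsOpen U ∧ s₀ ∈ U ∧
      ∀ s ∈ U, L ((t:ℂ)*Γ s) = L ((t:ℂ)*Γ s₀) := by
    intro s₀
    obtain ⟨r, hr, hball⟩ := Metric.isOpen_iff.mp hΩ (Γ s₀) (hΓmem s₀)
    set ρ : ℝ := min (t*r) (δ/2) with hρdef
    have hρpos : 0 < ρ := lt_min (by positivity) (by positivity)
    have hsub : Metric.ball ((t:ℂ)*Γ s₀) ρ ⊆ S := by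
      intro w hw
      rw [Metric.mem_ball, dist_eq_norm] at hw
      have htc : (t:ℂ) ≠ 0 := by exact_mod_cast ne_of_gt ht.1
      constructor
      · have : w/(t:ℂ) ∈ Metric.ball (Γ s₀) r := by
          rw [Metric.mem_ball, dist_eq_norm]
          have : w/(t:ℂ) - Γ s₀ = (w - (t:ℂ)*Γ s₀)/(t:ℂ) := by field_simp
          rw [this, norm_div, Complex.norm_real, Real.norm_of_nonneg (le_of_lt ht.1)]
          rw [div_lt_iff₀ ht.1]
          calc ‖w - (t:ℂ)*Γ s₀‖ < ρ := hw
            _ ≤ t*r := min_le_left _ _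
            _ = r * t := mul_comm _ _
        have := hstar _ (hball this) t ht
        rwa [show (t:ℂ)*(w/(t:ℂ)) = w by field_simp] at this
      · rw [Metric.mem_ball, dist_zero_right]
        calc ‖w‖ ≤ ‖w - (t:ℂ)*Γ s₀‖ + ‖(t:ℂ)*Γ s₀‖ := by simpa using norm_add_le (w - (t:ℂ)*Γ s₀) ((t:ℂ)*Γ s₀)
          _ < ρ + δ/2 := by
              apply add_lt_add_of_lt_of_le hw
              rw [norm_mul, Complex.norm_real, Real.norm_of_nonneg (le_of_lt ht.1)]
              exact le_trans (mul_le_mul_of_nonneg_left (hMbd s₀) (le_of_lt ht.1)) htM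
          _ ≤ δ/2 + δ/2 := by apply add_le_add_left (min_le_right _ _)
          _ = δ := by ring
    have hconst := hLloc ((t:ℂ)*Γ s₀) (htΓ s₀) ρ hρpos hsub
    refine ⟨(fun s : unitInterval => Γ s) ⁻¹' (Metric.ball (Γ s₀) (ρ/t)),
      (Metric.isOpen_ball).preimage Γ.continuous, ?_, ?_⟩
    · simp [Metric.mem_ball, hρpos, ht.1, div_pos]
    · intro s hs
      apply hconst
      rw [Metric.mem_ball, dist_eq_norm]
      have : (t:ℂ)*Γ s - (t:ℂ)*Γ s₀ = (t:ℂ)*(Γ s - Γ s₀) := by ring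
      rw [this, norm_mul, Complex.norm_real, Real.norm_of_nonneg (le_of_lt ht.1)]
      have hs' : ‖Γ s - Γ s₀‖ < ρ/t := by
        have := hs; rwa [Set.mem_preimage, Metric.mem_ball, dist_eq_norm] at this
      calc t * ‖Γ s - Γ s₀‖ < t * (ρ/t) := by
            apply mul_lt_mul_of_pos_left hs' ht.1
        _ = ρ := by field_simp [ht.1.ne']
  -- clopen argument on the unit interval
  set A : Set unitInterval := {s | L ((t:ℂ)*Γ s) = L ((t:ℂ)*Γ 0)} with hAdef
  have hAopen : IsOpen A := by
    rw [isOpen_iff_mem_nhds]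
    intro s₀ hs₀
    obtain ⟨U, hUopen, hUmem, hU⟩ := hkey s₀
    apply Filter.mem_of_superset (hUopen.mem_nhds hUmem)
    intro s hs
    simp only [hAdef, Set.mem_setOf_eq]
    rw [hU s hs, hs₀]
  have hAclosed : IsClosed A := by
    rw [← isOpen_compl_iff, isOpen_iff_mem_nhds]
    intro s₀ hs₀
    obtain ⟨U, hUopen, hUmem, hU⟩ := hkey s₀
    apply Filter.mem_of_superset (hUopen.mem_nhds hUmem)
    intro s hs hsA
    apply hs₀
    simp only [hAdef, Set.mem_setOf_eq] at hsA ⊢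
    rw [← hU s hs, hsA]
  have hAuniv : A = Set.univ := IsClopen.eq_univ ⟨hAclosed, hAopen⟩ ⟨0, rfl⟩
  have h1A : (1 : unitInterval) ∈ A := hAuniv ▸ Set.mem_univ _
  have hend : L ((t:ℂ)*z') = L ((t:ℂ)*z) := by
    have := h1A
    simp only [hAdef, Set.mem_setOf_eq] at this
    rwa [Γ.source, Γ.target] at this
  rw [← hLray z hz t ht, ← hLray z' hz' t ht, hend]

private lemma aux_part1 (Ω : Set ℂ) (h0 : (0:ℂ) ∉ Ω) (htouch : (0:ℂ) ∈ closure Ω)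
    (F : ℂ → ℂ) (b : ℂ) (τ δ C : ℝ) (hτ : 0 < τ) (hδ : 0 < δ) (hC : 0 ≤ C)
    (ψ : ℂ → ℝ) (hψdef : ψ = fun z => (F z).re + τ * Real.log ‖z‖)
    (g : ℂ → ℝ → ℝ)
    (hgbound : ∀ z ∈ Ω ∩ Metric.ball 0 δ, ∀ s : ℝ, s ∈ Set.Ioc (0:ℝ) 1 → |g z s| ≤ C * ‖z‖)
    (L : ℂ → ℝ) (hLdef : L = fun z => ψ z - ∫ s in (0:ℝ)..1, g z s)
    (hLconst : ∀ z ∈ Ω ∩ Metric.ball 0 δ, ∀ z' ∈ Ω ∩ Metric.ball 0 δ, L z = L z') :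
    Filter.Tendsto (fun z => Complex.exp (-(F z - F b))) (nhdsWithin 0 Ω) (nhds 0) := by
  -- reference point
  obtain ⟨z₀, hz₀Ω, hz₀d⟩ := Metric.mem_closure_iff.mp htouch δ hδ
  have hz₀ : z₀ ∈ Ω ∩ Metric.ball 0 δ :=
    ⟨hz₀Ω, by rw [Metric.mem_ball, dist_comm]; exact hz₀d⟩
  set c₀ : ℝ := L z₀ with hc₀
  set K : ℝ := Real.exp ((F b).re - c₀ + C*δ) with hK
  -- pointwise bound
  have hbd : ∀ z ∈ Ω ∩ Metric.ball 0 δ, ‖Complex.exp (-(F z - F b))‖ ≤ K * ‖z‖ ^ τ := by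
    intro z hz
    have hzpos : 0 < ‖z‖ := by
      rw [norm_pos_iff]; exact fun h => h0 (h ▸ hz.1)
    have hIbd : |∫ s in (0:ℝ)..1, g z s| ≤ C * ‖z‖ := by
      have := intervalIntegral.norm_integral_le_of_norm_le_const (C := C * ‖z‖)
        (f := g z) (a := 0) (b := 1) ?_
      · simpa using this
      · intro x hx
        rw [Set.uIoc_of_le (by norm_num : (0:ℝ) ≤ 1)] at hx
        simpa using hgbound z hz x hx
    have hψz : ψ z = c₀ + ∫ s in (0:ℝ)..1, g z s := by
      rw [hc₀, hLconst z₀ hz₀ z hz, hLdef]; ring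
    have hre : (F b).re - (F z).re ≤ (F b).re - c₀ + C*δ + τ * Real.log ‖z‖ := by
      have h1 : (F z).re = ψ z - τ * Real.log ‖z‖ := by rw [hψdef]; simp
      have h2 : ‖z‖ ≤ δ := by
        have := hz.2; rw [Metric.mem_ball, dist_zero_right] at this; linarith
      have h3 : -(∫ s in (0:ℝ)..1, g z s) ≤ C * ‖z‖ := by
        have := abs_le.mp hIbd; linarith [this.1]
      have h4 : C * ‖z‖ ≤ C * δ := mul_le_mul_of_nonneg_left h2 hC
      rw [h1, hψz]; linarith
    rw [Complex.norm_exp]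
    have : (-(F z - F b)).re = (F b).re - (F z).re := by simp
    rw [this]
    calc Real.exp ((F b).re - (F z).re)
        ≤ Real.exp ((F b).re - c₀ + C*δ + τ * Real.log ‖z‖) := Real.exp_le_exp.mpr hre
      _ = K * ‖z‖ ^ τ := by
          rw [Real.exp_add, hK, Real.rpow_def_of_pos hzpos, mul_comm (Real.log ‖z‖) τ]
  -- squeeze
  apply squeeze_zero_norm' (a := fun z => K * ‖z‖ ^ τ)
  · have hmem : Ω ∩ Metric.ball 0 δ ∈ nhdsWithin (0:ℂ) Ω := by
      apply Filter.inter_mem (self_mem_nhdsWithin)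
      exact nhdsWithin_le_nhds (Metric.ball_mem_nhds 0 hδ)
    filter_upwards [hmem] with z hz
    exact hbd z hz
  · have h1 : Filter.Tendsto (fun z : ℂ => ‖z‖) (nhdsWithin 0 Ω) (nhds 0) := by
      have := (continuous_norm (E := ℂ)).tendsto 0
      rw [norm_zero] at this
      exact this.mono_left nhdsWithin_le_nhds
    have h2 : Filter.Tendsto (fun x : ℝ => x ^ τ) (nhds 0) (nhds 0) := by
      have := (Real.continuousAt_rpow_const 0 τ (Or.inr (le_of_lt hτ))).tendsto
      rwa [Real.zero_rpow (ne_of_gt hτ)] at this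
    have := (h2.comp h1).const_mul K
    simpa using this

private lemma aux_part2 (Ω : Set ℂ) (hΩ : IsOpen Ω)
    (hstar : ∀ a ∈ Ω, ∀ t : ℝ, t ∈ Set.Ioc (0:ℝ) 1 → (t : ℂ) * a ∈ Ω)
    (h0 : (0:ℂ) ∉ Ω)
    (p q : ℂ → ℂ) (hp : DifferentiableOn ℂ p Ω) (hq : DifferentiableOn ℂ q Ω)
    (hpz : ∀ z ∈ Ω, p z ≠ 0) (b : ℂ) (hb : b ∈ Ω)
    (F : ℂ → ℂ) (hF : ∀ z ∈ Ω, HasDerivAt F (q z / p z) z)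
    (part1 : Filter.Tendsto (fun z => Complex.exp (-(F z - F b))) (nhdsWithin 0 Ω) (nhds 0)) :
    ∀ a ∈ Ω, Filter.Tendsto
      (fun ε : ℝ => ∫ t in ε..1,
        q ((t : ℂ) * a) * ((p ((t : ℂ) * a))⁻¹ * Complex.exp (-(F ((t : ℂ) * a) - F b))) * a)
      (nhdsWithin 0 (Set.Ioi 0))
      (nhds (-(p a) * ((p a)⁻¹ * Complex.exp (-(F a - F b))))) := by
  intro a ha
  set f : ℝ → ℂ := fun t => Complex.exp (-(F ((t:ℂ)*a) - F b)) with hfdef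
  set f' : ℝ → ℂ := fun t =>
    Complex.exp (-(F ((t:ℂ)*a) - F b)) * (-(a * (q ((t:ℂ)*a) / p ((t:ℂ)*a)))) with hf'def
  have hFcont : ContinuousOn F Ω := fun z hz => (hF z hz).continuousAt.continuousWithinAt
  have hfderiv : ∀ t : ℝ, t ∈ Set.Ioc (0:ℝ) 1 → HasDerivAt f (f' t) t := by
    intro t ht
    have hmem : (t:ℂ)*a ∈ Ω := hstar a ha t ht
    have hγ : HasDerivAt (fun x : ℝ => (x:ℂ)*a) a t := by
      have h1 : HasDerivAt (fun x : ℝ => (x:ℂ)) 1 t := Complex.ofRealCLM.hasDerivAt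
      simpa using h1.mul_const a
    have hFd : HasDerivAt (fun x : ℝ => F ((x:ℂ)*a)) (a * (q ((t:ℂ)*a) / p ((t:ℂ)*a))) t := by
      have := ((hF _ hmem).hasFDerivAt.restrictScalars ℝ).comp_hasDerivAt t hγ
      simpa [Function.comp_def] using this
    have hinner : HasDerivAt (fun x : ℝ => -(F ((x:ℂ)*a) - F b))
        (-(a * (q ((t:ℂ)*a) / p ((t:ℂ)*a)))) t := (hFd.sub_const (F b)).neg
    exact hinner.cexp
  -- the integral identity for ε ∈ (0,1)
  have hint : ∀ ε : ℝ, ε ∈ Set.Ioo (0:ℝ) 1 →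
      (∫ t in ε..1, q ((t : ℂ) * a) * ((p ((t : ℂ) * a))⁻¹ *
        Complex.exp (-(F ((t : ℂ) * a) - F b))) * a) = f ε - f 1 := by
    intro ε hε
    have huIcc : Set.uIcc ε 1 = Set.Icc ε 1 := Set.uIcc_of_le (le_of_lt hε.2)
    have hsubset : Set.Icc ε 1 ⊆ Set.Ioc (0:ℝ) 1 := fun x hx => ⟨lt_of_lt_of_le hε.1 hx.1, hx.2⟩
    have hf'cont : ContinuousOn f' (Set.uIcc ε 1) := by
      rw [huIcc]
      have hc : ContinuousOn (fun x : ℝ => (x:ℂ)*a) (Set.Icc ε 1) :=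
        (Complex.continuous_ofReal.continuousOn).mul continuousOn_const
      have hmapsto : Set.MapsTo (fun x : ℝ => (x:ℂ)*a) (Set.Icc ε 1) Ω :=
        fun x hx => hstar a ha x (hsubset hx)
      have hFc : ContinuousOn (fun x : ℝ => F ((x:ℂ)*a)) (Set.Icc ε 1) :=
        hFcont.comp hc hmapsto
      have hqc : ContinuousOn (fun x : ℝ => q ((x:ℂ)*a)) (Set.Icc ε 1) :=
        (hq.continuousOn).comp hc hmapsto
      have hpc : ContinuousOn (fun x : ℝ => p ((x:ℂ)*a)) (Set.Icc ε 1) :=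
        (hp.continuousOn).comp hc hmapsto
      have hdivc : ContinuousOn (fun x : ℝ => q ((x:ℂ)*a) / p ((x:ℂ)*a)) (Set.Icc ε 1) :=
        hqc.div hpc (fun x hx => hpz _ (hmapsto hx))
      exact ((hFc.sub continuousOn_const).neg.cexp).mul ((continuousOn_const.mul hdivc).neg)
    have hftc : ∫ t in ε..1, f' t = f 1 - f ε := by
      apply intervalIntegral.integral_eq_sub_of_hasDerivAt (f := f)
      · intro u hu
        rw [huIcc] at hu
        exact hfderiv u (hsubset hu)
      · exact hf'cont.intervalIntegrable
    have hcongr : ∀ t ∈ Set.uIcc ε 1,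
        q ((t : ℂ) * a) * ((p ((t : ℂ) * a))⁻¹ * Complex.exp (-(F ((t : ℂ) * a) - F b))) * a
        = -(f' t) := by
      intro t _
      simp only [hf'def]
      rw [div_eq_mul_inv]
      ring
    rw [intervalIntegral.integral_congr hcongr, intervalIntegral.integral_neg, hftc]
    ring
  -- the limit
  have htend : Filter.Tendsto (fun ε : ℝ => (ε:ℂ)*a) (nhdsWithin 0 (Set.Ioi 0))
      (nhdsWithin 0 Ω) := by
    rw [tendsto_nhdsWithin_iff]
    constructor
    · have := (Complex.continuous_ofReal.mul (continuous_const (y := a))).tendsto (0:ℝ)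
      simp only [Pi.mul_apply, Complex.ofReal_zero, zero_mul] at this
      exact this.mono_left nhdsWithin_le_nhds
    · filter_upwards [Ioo_mem_nhdsGT_of_mem (Set.mem_Ico.mpr ⟨le_refl 0, zero_lt_one⟩)] with ε hε
      exact hstar a ha ε ⟨hε.1, le_of_lt hε.2⟩
  have hf0 : Filter.Tendsto (fun ε : ℝ => f ε) (nhdsWithin 0 (Set.Ioi 0)) (nhds 0) :=
    part1.comp htend
  have hmain : Filter.Tendsto (fun ε : ℝ => f ε - f 1) (nhdsWithin 0 (Set.Ioi 0))
      (nhds (0 - f 1)) := hf0.sub tendsto_const_nhds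
  rw [zero_sub] at hmain
  apply Filter.Tendsto.congr' ?_ ?_
  · exact fun ε => f ε - f 1
  · filter_upwards [Ioo_mem_nhdsGT_of_mem (Set.mem_Ico.mpr ⟨le_refl 0, zero_lt_one⟩)] with ε hε
    exact (hint ε hε).symm
  · have hval : -(p a) * ((p a)⁻¹ * Complex.exp (-(F a - F b))) = -(f 1) := by
      simp only [hfdef, Complex.ofReal_one, one_mul]
      rw [← mul_assoc, neg_mul, mul_inv_cancel₀ (hpz a ha)]
      ring
    rw [hval]
    exact hmain

/-- Construction of the prototype solution.  `Ω` is simply connected, star-shaped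
around `0`, does not contain `0` but touches it; `p, q` are holomorphic with `p`
nonvanishing; `F` is a primitive of `q/p` on `Ω`, so that `∫_b^a q/p = F a - F b` and
`f₀ a = (1/p a) · exp(-(F a - F b))`.  Under the regular singularity bound
`|q/p + τ/ζ| < C` near `0` (with `τ > 0`), the factor `exp(-(F ζ - F b))` tends to `0`
as `ζ → 0` in `Ω`, and `f₀` satisfies `f₀ a = -(1/p a) ∫_{ζ=0}^a q f₀ dζ`, the improper
integral being taken along the radial path, i.e. the limit as `ε → 0⁺` of
`∫_ε^1 q(ta) f₀(ta) a dt` equals `-(p a) f₀ a`. -/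
theorem stmt4 (Ω : Set ℂ) (hΩ : IsOpen Ω) (hsc : SimplyConnectedSpace Ω)
    (hstar : ∀ a ∈ Ω, ∀ t : ℝ, t ∈ Set.Ioc (0:ℝ) 1 → (t : ℂ) * a ∈ Ω)
    (h0 : (0:ℂ) ∉ Ω) (htouch : (0:ℂ) ∈ closure Ω)
    (p q : ℂ → ℂ) (hp : DifferentiableOn ℂ p Ω) (hq : DifferentiableOn ℂ q Ω)
    (hpz : ∀ z ∈ Ω, p z ≠ 0)
    (b : ℂ) (hb : b ∈ Ω)
    (F : ℂ → ℂ) (hF : ∀ z ∈ Ω, HasDerivAt F (q z / p z) z)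
    (τ δ C : ℝ) (hτ : 0 < τ) (hδ : 0 < δ)
    (hbound : ∀ z ∈ Ω, ‖z‖ < δ → ‖q z / p z + (τ : ℂ) / z‖ < C) :
    Filter.Tendsto (fun z => Complex.exp (-(F z - F b))) (nhdsWithin 0 Ω) (nhds 0) ∧
    ∀ a ∈ Ω, Filter.Tendsto
      (fun ε : ℝ => ∫ t in ε..1,
        q ((t : ℂ) * a) * ((p ((t : ℂ) * a))⁻¹ * Complex.exp (-(F ((t : ℂ) * a) - F b))) * a)
      (nhdsWithin 0 (Set.Ioi 0))
      (nhds (-(p a) * ((p a)⁻¹ * Complex.exp (-(F a - F b))))) := by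
  set ψ : ℂ → ℝ := fun z => (F z).re + τ * Real.log ‖z‖ with hψdef
  set g : ℂ → ℝ → ℝ :=
    fun z (s:ℝ) => ((q ((s:ℂ)*z) / p ((s:ℂ)*z) + (τ:ℂ)/((s:ℂ)*z)) * z).re with hgdef
  set L : ℂ → ℝ := fun z => ψ z - ∫ s in (0:ℝ)..1, g z s with hLdef
  have hmaster : ∀ (w v : ℂ) (u : ℝ), w + (u:ℂ)*v ∈ Ω →
      HasDerivAt (fun x : ℝ => ψ (w + (x:ℂ)*v))
        (((q (w + (u:ℂ)*v) / p (w + (u:ℂ)*v) + (τ:ℂ)/(w + (u:ℂ)*v)) * v).re) u := by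
    intro w v u hmem
    simp only [hψdef]
    exact aux_master Ω p q hpz h0 F hF τ w v u hmem
  have hray : ∀ z ∈ Ω, ∀ u : ℝ, u ∈ Set.Ioc (0:ℝ) 1 →
      HasDerivAt (fun x : ℝ => ψ ((x:ℂ)*z)) (g z u) u := by
    intro z hz u hu
    have := hmaster 0 z u (by simpa using hstar z hz u hu)
    simp only [hgdef]
    simpa using this
  have hgbound : ∀ z ∈ Ω ∩ Metric.ball 0 δ, ∀ s : ℝ, s ∈ Set.Ioc (0:ℝ) 1 →
      |g z s| ≤ C * ‖z‖ := by
    intro z hz s hs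
    have hmem : (s:ℂ)*z ∈ Ω := hstar z hz.1 s hs
    have hsn : ‖(s:ℂ)*z‖ < δ := by
      have h' : ‖z‖ < δ := by
        have := hz.2; rwa [Metric.mem_ball, dist_zero_right] at this
      calc ‖(s:ℂ)*z‖ = s * ‖z‖ := by
            rw [norm_mul, Complex.norm_real, Real.norm_of_nonneg (le_of_lt hs.1)]
        _ ≤ 1 * ‖z‖ := mul_le_mul_of_nonneg_right hs.2 (norm_nonneg z)
        _ < δ := by simpa using h'
    calc |g z s| ≤ ‖(q ((s:ℂ)*z) / p ((s:ℂ)*z) + (τ:ℂ)/((s:ℂ)*z)) * z‖ :=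
          Complex.abs_re_le_norm _
      _ = ‖q ((s:ℂ)*z) / p ((s:ℂ)*z) + (τ:ℂ)/((s:ℂ)*z)‖ * ‖z‖ := norm_mul _ _
      _ ≤ C * ‖z‖ :=
          mul_le_mul_of_nonneg_right (le_of_lt (hbound _ hmem hsn)) (norm_nonneg z)
  have hC : 0 ≤ C := by
    obtain ⟨z, hzΩ, hzd⟩ := Metric.mem_closure_iff.mp htouch δ hδ
    exact le_trans (norm_nonneg _)
      (le_of_lt (hbound z hzΩ (by rwa [dist_comm,
        dist_zero_right] at hzd)))
  have hgint := aux_gint Ω hΩ hstar h0 p q hp hq hpz τ δ C g hgdef hgbound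
  have hftc := aux_ftc Ω δ ψ g hray hgint
  have hLray := aux_Lray Ω δ τ p q ψ g hgdef hgint hftc L hLdef
  have hLloc := aux_Lloc Ω δ C τ p q ψ g hstar hbound hmaster hray hgint hgbound L hLdef
  have hLconst := aux_Lconst Ω hΩ hsc hstar h0 δ hδ L hLray hLloc
  have part1 := aux_part1 Ω h0 htouch F b τ δ C hτ hδ hC ψ hψdef g hgbound L hLdef hLconst
  exact ⟨part1, aux_part2 Ω hΩ hstar h0 p q hp hq hpz b hb F hF part1⟩
end

section
/- Let Ω ⊂ ℂ be open, star-shaped around 0, 0 ∉ Ω. Fix ν > 0, σ > −1, Λ ≥ 0. If f is holomorphic on Ω with |f(ζ)| ≤ N |ζ|^σ e^{Λ|ζ|} on Ω, then the fractional integral g(a) = (1/Γ(ν)) ∫₀^1 (a − ta)^{ν−1} f(ta) a dt (integrating along the straight segment from 0 to a) satisfies |g(a)| ≤ N (Γ(σ+1)/Γ(σ+ν+1)) |a|^{σ+ν} e^{Λ|a|} for all a ∈ Ω. -/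
open MeasureTheory intervalIntegral

lemma beta_aux_integrable {u v : ℝ} (hu : 0 < u) (hv : 0 < v) :
    IntervalIntegrable (fun x : ℝ => x ^ (u - 1) * (1 - x) ^ (v - 1)) volume 0 1 := by
  have h := (Complex.betaIntegral_convergent (u := (u : ℂ)) (v := (v : ℂ))
      (by simpa using hu) (by simpa using hv)).norm
  apply h.congr_ae
  filter_upwards [ae_restrict_mem measurableSet_Ioc] with x hx
  rw [Set.uIoc_of_le zero_le_one] at hx
  have hx0 : (0:ℝ) ≤ x := hx.1.le
  have hx1 : (0:ℝ) ≤ 1 - x := by linarith [hx.2]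
  rw [norm_mul]
  have e1 : ((x : ℂ)) ^ ((u : ℂ) - 1) = ((x ^ (u - 1) : ℝ) : ℂ) := by
    rw [Complex.ofReal_cpow hx0]; push_cast; ring_nf
  have e2 : ((1 : ℂ) - x) ^ ((v : ℂ) - 1) = (((1 - x) ^ (v - 1) : ℝ) : ℂ) := by
    rw [Complex.ofReal_cpow hx1]; push_cast; ring_nf
  rw [e1, e2, Complex.norm_real, Complex.norm_real,
    Real.norm_of_nonneg (Real.rpow_nonneg hx0 _),
    Real.norm_of_nonneg (Real.rpow_nonneg hx1 _)]

lemma beta_aux_eval {u v : ℝ} (hu : 0 < u) (hv : 0 < v) :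
    ∫ x in (0:ℝ)..1, x ^ (u - 1) * (1 - x) ^ (v - 1)
      = Real.Gamma u * Real.Gamma v / Real.Gamma (u + v) := by
  have hG : Real.Gamma (u + v) ≠ 0 := (Real.Gamma_pos_of_pos (by linarith)).ne'
  have key := Complex.Gamma_mul_Gamma_eq_betaIntegral (s := (u : ℂ)) (t := (v : ℂ))
      (by simpa using hu) (by simpa using hv)
  have hcb : Complex.betaIntegral (u : ℂ) (v : ℂ)
      = ((∫ x in (0:ℝ)..1, x ^ (u - 1) * (1 - x) ^ (v - 1) : ℝ) : ℂ) := by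
    rw [Complex.betaIntegral, ← intervalIntegral.integral_ofReal]
    apply intervalIntegral.integral_congr
    intro x hx
    rw [Set.uIcc_of_le zero_le_one] at hx
    have hx0 : (0:ℝ) ≤ x := hx.1
    have hx1 : (0:ℝ) ≤ 1 - x := by linarith [hx.2]
    push_cast
    rw [Complex.ofReal_cpow hx0, Complex.ofReal_cpow hx1]
    push_cast; ring_nf
  rw [hcb] at key
  have : (Real.Gamma u : ℂ) * Real.Gamma v
      = (Real.Gamma (u + v) : ℂ) * ((∫ x in (0:ℝ)..1, x ^ (u - 1) * (1 - x) ^ (v - 1) : ℝ) : ℂ) := by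
    rw [Complex.Gamma_ofReal, Complex.Gamma_ofReal, ← Complex.ofReal_add,
      Complex.Gamma_ofReal] at key
    exact key
  have h2 := Complex.ofReal_injective (by push_cast at this ⊢; exact this :
    ((Real.Gamma u * Real.Gamma v : ℝ) : ℂ)
      = ((Real.Gamma (u + v) * ∫ x in (0:ℝ)..1, x ^ (u - 1) * (1 - x) ^ (v - 1) : ℝ) : ℂ))
  rw [eq_div_iff hG]
  linarith [h2]

/-- Smoothing effect of the Riemann–Liouville fractional integral of order `ν > 0`
with base point `0`, along the radial segment: if `|f(ζ)| ≤ N|ζ|^σ e^{Λ|ζ|}` with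
`σ > -1` and `Λ ≥ 0`, then
`|(1/Γ(ν)) ∫₀¹ (a - ta)^{ν-1} f(ta) a dt| ≤ N (Γ(σ+1)/Γ(σ+ν+1)) |a|^{σ+ν} e^{Λ|a|}`. -/
theorem stmt17 (Ω : Set ℂ) (hΩ : IsOpen Ω)
    (hstar : ∀ a ∈ Ω, ∀ t : ℝ, t ∈ Set.Ioc (0:ℝ) 1 → (t : ℂ) * a ∈ Ω)
    (h0 : (0:ℂ) ∉ Ω)
    (ν σ Λ N : ℝ) (hν : 0 < ν) (hσ : -1 < σ) (hΛ : 0 ≤ Λ) (hN : 0 ≤ N)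
    (f : ℂ → ℂ) (hf : DifferentiableOn ℂ f Ω)
    (hfb : ∀ z ∈ Ω, ‖f z‖ ≤ N * ‖z‖ ^ σ * Real.exp (Λ * ‖z‖)) :
    ∀ a ∈ Ω,
      ‖((Real.Gamma ν : ℂ))⁻¹ *
          ∫ t in (0:ℝ)..1, (a - (t : ℂ) * a) ^ ((ν : ℂ) - 1) * f ((t : ℂ) * a) * a‖ ≤
        N * (Real.Gamma (σ + 1) / Real.Gamma (σ + ν + 1)) * ‖a‖ ^ (σ + ν) *
          Real.exp (Λ * ‖a‖) := by
  intro a ha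
  have ha0 : a ≠ 0 := fun h => h0 (h ▸ ha)
  have hna : 0 < ‖a‖ := norm_pos_iff.2 ha0
  have hΓν : 0 < Real.Gamma ν := Real.Gamma_pos_of_pos hν
  set C : ℝ := N * ‖a‖ ^ (σ + ν) * Real.exp (Λ * ‖a‖) with hCdef
  have hC : 0 ≤ C := by positivity
  -- integrability of the bound
  have hint : IntervalIntegrable
      (fun t : ℝ => C * (t ^ σ * (1 - t) ^ (ν - 1))) volume 0 1 := by
    have := (beta_aux_integrable (u := σ + 1) (v := ν) (by linarith) hν).const_mul C
    simpa using this
  -- pointwise bound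
  have hbd : ∀ᵐ (t : ℝ) ∂(volume.restrict (Set.uIoc (0:ℝ) 1)),
      ‖(a - (t : ℂ) * a) ^ ((ν : ℂ) - 1) * f ((t : ℂ) * a) * a‖
        ≤ C * (t ^ σ * (1 - t) ^ (ν - 1)) := by
    filter_upwards [ae_restrict_mem measurableSet_uIoc] with t ht
    rw [Set.uIoc_of_le zero_le_one] at ht
    have ht0 : 0 < t := ht.1
    have ht1 : t ≤ 1 := ht.2
    have h1t : 0 ≤ 1 - t := by linarith
    have hmem := hstar a ha t ht
    have hnta : ‖(t : ℂ) * a‖ = t * ‖a‖ := by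
      rw [norm_mul, Complex.norm_real, Real.norm_of_nonneg ht0.le]
    have hcpow : ‖(a - (t : ℂ) * a) ^ ((ν : ℂ) - 1)‖ = (1 - t) ^ (ν - 1) * ‖a‖ ^ (ν - 1) := by
      have : a - (t : ℂ) * a = ((1 - t : ℝ) : ℂ) * a := by push_cast; ring
      have he : ((ν : ℂ) - 1) = ((ν - 1 : ℝ) : ℂ) := by push_cast; ring
      rw [this, he, Complex.norm_cpow_real,
        norm_mul, Complex.norm_real, Real.norm_of_nonneg h1t,
        Real.mul_rpow h1t (norm_nonneg _ : (0:ℝ) ≤ _)]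
    have hfle : ‖f ((t : ℂ) * a)‖ ≤ N * (t * ‖a‖) ^ σ * Real.exp (Λ * (t * ‖a‖)) := by
      have := hfb _ hmem
      rwa [hnta] at this
    have hA : ‖a‖ ^ (ν - 1) * ‖a‖ ^ σ * ‖a‖ ^ (1 : ℝ) = ‖a‖ ^ (σ + ν) := by
      rw [← Real.rpow_add hna, ← Real.rpow_add hna]
      ring_nf
    calc ‖(a - (t : ℂ) * a) ^ ((ν : ℂ) - 1) * f ((t : ℂ) * a) * a‖
        = ((1 - t) ^ (ν - 1) * ‖a‖ ^ (ν - 1)) * ‖f ((t : ℂ) * a)‖ * ‖a‖ := by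
          rw [norm_mul, norm_mul, hcpow]
      _ ≤ ((1 - t) ^ (ν - 1) * ‖a‖ ^ (ν - 1)) *
            (N * (t * ‖a‖) ^ σ * Real.exp (Λ * (t * ‖a‖))) * ‖a‖ := by
          gcongr
      _ = (N * (t ^ σ * (1 - t) ^ (ν - 1))) * (‖a‖ ^ (ν - 1) * ‖a‖ ^ σ * ‖a‖ ^ (1 : ℝ)) *
            Real.exp (Λ * (t * ‖a‖)) := by
          rw [Real.mul_rpow ht0.le hna.le, Real.rpow_one]
          ring
      _ ≤ (N * (t ^ σ * (1 - t) ^ (ν - 1))) * (‖a‖ ^ (ν - 1) * ‖a‖ ^ σ * ‖a‖ ^ (1 : ℝ)) *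
            Real.exp (Λ * ‖a‖) := by
          gcongr
          nlinarith [hna.le, mul_nonneg hΛ hna.le]
      _ = C * (t ^ σ * (1 - t) ^ (ν - 1)) := by
          rw [hA, hCdef]
          ring
  have hle := intervalIntegral.norm_integral_le_abs_of_norm_le hbd hint
  have hval : (∫ t in (0:ℝ)..1, C * (t ^ σ * (1 - t) ^ (ν - 1)))
      = C * (Real.Gamma (σ + 1) * Real.Gamma ν / Real.Gamma (σ + 1 + ν)) := by
    have hb := beta_aux_eval (u := σ + 1) (v := ν) (by linarith) hν
    simp only [add_sub_cancel_right] at hb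
    rw [intervalIntegral.integral_const_mul, hb]
  rw [hval] at hle
  rw [norm_mul, norm_inv, Complex.norm_real, Real.norm_of_nonneg hΓν.le]
  have habs : |C * (Real.Gamma (σ + 1) * Real.Gamma ν / Real.Gamma (σ + 1 + ν))|
      = C * (Real.Gamma (σ + 1) * Real.Gamma ν / Real.Gamma (σ + 1 + ν)) := by
    have h1 : 0 < Real.Gamma (σ + 1) := Real.Gamma_pos_of_pos (by linarith)
    have h2 : 0 < Real.Gamma (σ + 1 + ν) := Real.Gamma_pos_of_pos (by linarith)
    have : 0 ≤ C * (Real.Gamma (σ + 1) * Real.Gamma ν / Real.Gamma (σ + 1 + ν)) := by positivity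
    exact abs_of_nonneg this
  rw [habs] at hle
  have hfinal : (Real.Gamma ν)⁻¹ *
      (C * (Real.Gamma (σ + 1) * Real.Gamma ν / Real.Gamma (σ + 1 + ν)))
      = N * (Real.Gamma (σ + 1) / Real.Gamma (σ + ν + 1)) * ‖a‖ ^ (σ + ν) *
          Real.exp (Λ * ‖a‖) := by
    have h2 : Real.Gamma (σ + 1 + ν) = Real.Gamma (σ + ν + 1) := by ring_nf
    rw [h2, hCdef]
    have hg : Real.Gamma ν ≠ 0 := hΓν.ne'
    have hg2 : Real.Gamma (σ + ν + 1) ≠ 0 := (Real.Gamma_pos_of_pos (by linarith)).ne'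
    field_simp
  calc (Real.Gamma ν)⁻¹ * ‖∫ t in (0:ℝ)..1, (a - (t:ℂ) * a) ^ ((ν:ℂ) - 1) * f ((t:ℂ) * a) * a‖
      ≤ (Real.Gamma ν)⁻¹ * (C * (Real.Gamma (σ + 1) * Real.Gamma ν / Real.Gamma (σ + 1 + ν))) := by
        gcongr
    _ = _ := hfinal
end

section
/- Let Ω ⊂ ℂ be open and star-shaped around 0 with 0 ∉ Ω, and let k : Ω² → ℂ be continuous satisfying |k(a,a')| ≤ σ/|a| whenever |a| < δ and |a'| < δ (for some δ > 0, σ > 0). Fix ρ > σ and Λ ≥ 0. Then for any holomorphic φ on Ω with |φ(ζ)| ≤ N |ζ|^{ρ−1} e^{Λ|ζ|}, the function (Vφ)(a) = ∫₀^1 k(a, ta) φ(ta) a dt satisfies |(Vφ)(a)| ≤ (σ/ρ) N |a|^{ρ−1} e^{Λ|a|} for all a ∈ Ω with |a| < δ. -/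
/-- Contraction estimate near the origin: if `|k(a,a')| ≤ σ/|a|` for `|a|, |a'| < δ`,
and `|φ(ζ)| ≤ N|ζ|^{ρ-1} e^{Λ|ζ|}` with `ρ > σ > 0` and `Λ ≥ 0`, then the radial
Volterra integral satisfies `|(Vφ)(a)| ≤ (σ/ρ) N |a|^{ρ-1} e^{Λ|a|}` for `|a| < δ`. -/
theorem stmt19 (Ω : Set ℂ) (hΩ : IsOpen Ω)
    (hstar : ∀ a ∈ Ω, ∀ t : ℝ, t ∈ Set.Ioc (0:ℝ) 1 → (t : ℂ) * a ∈ Ω)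
    (h0 : (0:ℂ) ∉ Ω)
    (k : ℂ → ℂ → ℂ) (hk : ContinuousOn (fun z : ℂ × ℂ => k z.1 z.2) (Ω ×ˢ Ω))
    (σ ρ δ Λ N : ℝ) (hσ : 0 < σ) (hρ : σ < ρ) (hδ : 0 < δ) (hΛ : 0 ≤ Λ) (hN : 0 ≤ N)
    (hkb : ∀ a ∈ Ω, ∀ a' ∈ Ω, ‖a‖ < δ → ‖a'‖ < δ → ‖k a a'‖ ≤ σ / ‖a‖)
    (φ : ℂ → ℂ) (hφ : DifferentiableOn ℂ φ Ω)
    (hφb : ∀ z ∈ Ω, ‖φ z‖ ≤ N * ‖z‖ ^ (ρ - 1) * Real.exp (Λ * ‖z‖)) :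
    ∀ a ∈ Ω, ‖a‖ < δ →
      ‖∫ t in (0:ℝ)..1, k a ((t : ℂ) * a) * φ ((t : ℂ) * a) * a‖ ≤
        σ / ρ * N * ‖a‖ ^ (ρ - 1) * Real.exp (Λ * ‖a‖) := by
  intro a ha haδ
  have ha0 : 0 < ‖a‖ := by
    rw [norm_pos_iff]
    rintro rfl; exact h0 ha
  have hρ0 : 0 < ρ := hσ.trans hρ
  set C : ℝ := σ * N * ‖a‖ ^ (ρ - 1) * Real.exp (Λ * ‖a‖) with hC
  have hCnn : 0 ≤ C := by positivity
  have hint : IntervalIntegrable (fun t : ℝ => C * t ^ (ρ - 1)) MeasureTheory.volume 0 1 :=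
    (intervalIntegral.intervalIntegrable_rpow' (by linarith)).const_mul C
  have hbound : ∀ t ∈ Set.Ioc (0:ℝ) 1,
      ‖k a ((t : ℂ) * a) * φ ((t : ℂ) * a) * a‖ ≤ C * t ^ (ρ - 1) := by
    intro t ht
    obtain ⟨ht0, ht1⟩ := ht
    have hta : (t : ℂ) * a ∈ Ω := hstar a ha t ⟨ht0, ht1⟩
    have hnorm : ‖(t : ℂ) * a‖ = t * ‖a‖ := by
      rw [norm_mul, Complex.norm_real, Real.norm_eq_abs, abs_of_pos ht0]
    have htaδ : ‖(t : ℂ) * a‖ < δ := by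
      rw [hnorm]
      nlinarith
    have h1 : ‖k a ((t : ℂ) * a)‖ ≤ σ / ‖a‖ := hkb a ha _ hta haδ htaδ
    have h2 : ‖φ ((t : ℂ) * a)‖ ≤ N * (t * ‖a‖) ^ (ρ - 1) * Real.exp (Λ * (t * ‖a‖)) := by
      have := hφb _ hta
      rwa [hnorm] at this
    have hmul : (t * ‖a‖) ^ (ρ - 1) = t ^ (ρ - 1) * ‖a‖ ^ (ρ - 1) :=
      Real.mul_rpow ht0.le ha0.le
    have hexp : Real.exp (Λ * (t * ‖a‖)) ≤ Real.exp (Λ * ‖a‖) := by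
      apply Real.exp_le_exp.mpr
      exact mul_le_mul_of_nonneg_left (by nlinarith) hΛ
    have htp : 0 ≤ t ^ (ρ - 1) := Real.rpow_nonneg ht0.le _
    calc ‖k a ((t : ℂ) * a) * φ ((t : ℂ) * a) * a‖
        = ‖k a ((t : ℂ) * a)‖ * ‖φ ((t : ℂ) * a)‖ * ‖a‖ := by
          rw [norm_mul, norm_mul]
      _ ≤ (σ / ‖a‖) * (N * (t * ‖a‖) ^ (ρ - 1) * Real.exp (Λ * (t * ‖a‖))) * ‖a‖ := by
          gcongr
      _ = (σ / ‖a‖ * ‖a‖) * N * (‖a‖ ^ (ρ - 1) * Real.exp (Λ * (t * ‖a‖)) * t ^ (ρ - 1)) := by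
          rw [hmul]; ring
      _ = σ * N * ‖a‖ ^ (ρ - 1) * Real.exp (Λ * (t * ‖a‖)) * t ^ (ρ - 1) := by
          rw [div_mul_cancel₀ σ ha0.ne']; ring
      _ ≤ C * t ^ (ρ - 1) := by
          rw [hC]
          gcongr
  have key : ‖∫ t in (0:ℝ)..1, k a ((t : ℂ) * a) * φ ((t : ℂ) * a) * a‖ ≤
      |∫ t in (0:ℝ)..1, C * t ^ (ρ - 1)| := by
    apply intervalIntegral.norm_integral_le_abs_of_norm_le _ hint
    rw [Set.uIoc_of_le (zero_le_one)]
    exact (MeasureTheory.ae_restrict_iff' measurableSet_Ioc).mpr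
      (Filter.Eventually.of_forall hbound)
  have hval : (∫ t in (0:ℝ)..1, C * t ^ (ρ - 1)) = C / ρ := by
    rw [intervalIntegral.integral_const_mul, integral_rpow (Or.inl (by linarith))]
    rw [Real.one_rpow, Real.zero_rpow (by linarith)]
    rw [sub_add_cancel]
    ring
  rw [hval, abs_of_nonneg (by positivity)] at key
  calc ‖∫ t in (0:ℝ)..1, k a ((t : ℂ) * a) * φ ((t : ℂ) * a) * a‖ ≤ C / ρ := key
    _ = σ / ρ * N * ‖a‖ ^ (ρ - 1) * Real.exp (Λ * ‖a‖) := by rw [hC]; ring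
end
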